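/- Linear extensions of a finite strict partial order are connected by adjacent transpositions of incomparable elements: any linear extension of (O, ≺) can be transformed into any other by a finite sequence of swaps of adjacent elements that are incomparable under ≺. -/
import Mathlib


/-- One adjacent transposition of two incomparable elements. -/
def IncompSwap {O : Type*} (prec : O → O → Prop) (L L' : List O) : Prop :=
  ∃ (l r : List O) (a b : O), ¬ prec a b ∧ ¬ prec b a ∧
    L = l ++ a :: b :: r ∧ L' = l ++ b :: a :: r

lemma incompSwap_cons {O : Type*} (prec : O → O → Prop) {L L' : List O} (c : O)
    (h : IncompSwap prec L L') : IncompSwap prec (c :: L) (c :: L') := by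
  obtain ⟨l, r, a, b, h1, h2, h3, h4⟩ := h
  exact ⟨c :: l, r, a, b, h1, h2, by simp [h3], by simp [h4]⟩

lemma rtg_cons {O : Type*} (prec : O → O → Prop) {L L' : List O} (c : O)
    (h : Relation.ReflTransGen (IncompSwap prec) L L') :
    Relation.ReflTransGen (IncompSwap prec) (c :: L) (c :: L') := by
  induction h with
  | refl => exact Relation.ReflTransGen.refl
  | tail _ hstep ih => exact ih.tail (incompSwap_cons prec c hstep)

/-- Move `a` to the front past elements it is incomparable with. -/
lemma move_front {O : Type*} (prec : O → O → Prop) (a : O) :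
    ∀ (l r : List O), (∀ b ∈ l, ¬ prec a b ∧ ¬ prec b a) →
    Relation.ReflTransGen (IncompSwap prec) (l ++ a :: r) (a :: (l ++ r)) := by
  intro l
  induction l with
  | nil => intro r _; exact Relation.ReflTransGen.refl
  | cons c l ih =>
    intro r h
    have hc := h c (by simp)
    have step : IncompSwap prec (c :: a :: (l ++ r)) (a :: c :: (l ++ r)) :=
      ⟨[], l ++ r, c, a, hc.2, hc.1, rfl, rfl⟩
    have h1 : Relation.ReflTransGen (IncompSwap prec) (c :: (l ++ a :: r))
        (c :: (a :: (l ++ r))) :=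
      rtg_cons prec c (ih r (fun b hb => h b (by simp [hb])))
    exact (h1.tail step)

lemma key {O : Type*} (prec : O → O → Prop) :
    ∀ (L₂ L₁ : List O), L₁.Perm L₂ →
    L₁.Pairwise (fun a b => ¬ prec b a) → L₂.Pairwise (fun a b => ¬ prec b a) →
    Relation.ReflTransGen (IncompSwap prec) L₁ L₂ := by
  intro L₂
  induction L₂ with
  | nil => intro L₁ hp _ _; rw [List.perm_nil.mp hp]
  | cons a t ih =>
    intro L₁ hp hp1 hp2
    have ha : a ∈ L₁ := hp.mem_iff.mpr (by simp)
    obtain ⟨l, r, rfl⟩ := List.append_of_mem ha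
    have hperm : (l ++ r).Perm t := by
      have h1 : (l ++ a :: r).Perm (a :: (l ++ r)) := by
        exact List.perm_middle.symm.symm
      exact (h1.symm.trans hp).cons_inv
    -- facts for moving a to front
    have hmove : ∀ b ∈ l, ¬ prec a b ∧ ¬ prec b a := by
      intro b hb
      constructor
      · -- b before a in L₁
        have := (List.pairwise_append.mp hp1).2.2 b hb a (by simp)
        exact this
      · -- b ∈ t, a before b in L₂
        have hbt : b ∈ t := hperm.mem_iff.mp (by simp [hb])
        exact (List.pairwise_cons.mp hp2).1 b hbt
    have h1 := move_front prec a l r hmove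
    have hplr : (l ++ r).Pairwise (fun a b => ¬ prec b a) := by
      have : (l ++ r).Sublist (l ++ a :: r) := by
        exact List.Sublist.append_left (List.sublist_cons_self a r) l
      exact hp1.sublist this
    have h2 := ih (l ++ r) hperm hplr (List.pairwise_cons.mp hp2).2
    exact h1.trans (rtg_cons prec a h2)

/-- Any two linear extensions of a finite strict partial order are connected
by a finite sequence of adjacent transpositions of incomparable elements. -/
theorem linear_extensions_connected_by_incomparable_swaps
    (O : Type*) [Fintype O] [DecidableEq O]
    (prec : O → O → Prop) [IsIrrefl O prec] [IsTrans O prec]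
    (L₁ L₂ : List O)
    (hnd₁ : L₁.Nodup) (hnd₂ : L₂.Nodup)
    (hall₁ : ∀ o : O, o ∈ L₁) (hall₂ : ∀ o : O, o ∈ L₂)
    (hext₁ : L₁.Pairwise (fun a b => ¬ prec b a))
    (hext₂ : L₂.Pairwise (fun a b => ¬ prec b a)) :
    Relation.ReflTransGen (IncompSwap prec) L₁ L₂ := by
  have hperm : L₁.Perm L₂ :=
    (List.perm_ext_iff_of_nodup hnd₁ hnd₂).mpr (fun x => by simp [hall₁, hall₂])
  exact key prec L₂ L₁ hperm hext₁ hext₂
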